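/- If B is the collection of bases of a matroid of rank k on [n], then Φ(B) = {Φ(B) : B ∈ B} satisfies the Strong Exchange Property, i.e., Φ(B) is the collection of bases of a Lagrangian orthogonal matroid. -/

import Mathlib

/-- `J n` models `[n] ∪ [n]*` : the element `(i, false)` is `i` and `(i, true)` is `i*`. -/
abbrev J (n : ℕ) := Fin n × Bool

/-- The star involution `i ↦ i*`, `i* ↦ i`. -/
def jstar {n : ℕ} (x : J n) : J n := (x.1, !x.2)

/-- `K* = { k* : k ∈ K }`. -/
def starSet {n : ℕ} (K : Finset (J n)) : Finset (J n) := K.image jstar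

/-- A subset `K ⊆ [n] ∪ [n]*` is admissible if `K ∩ K* = ∅`. -/
def Admissible {n : ℕ} (K : Finset (J n)) : Prop := K ∩ starSet K = ∅

/-- The Strong Exchange Property for a collection of subsets of `[n] ∪ [n]*`. -/
def StrongExchange {n : ℕ} (𝔅 : Set (Finset (J n))) : Prop :=
  ∀ A ∈ 𝔅, ∀ C ∈ 𝔅, ∀ a ∈ symmDiff A C, ∃ b ∈ C \ A, b ≠ jstar a ∧
    symmDiff A {a, b, jstar a, jstar b} ∈ 𝔅 ∧ symmDiff C {a, b, jstar a, jstar b} ∈ 𝔅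

/-- `ℬ` is the collection of bases of a matroid of rank `k` on `[n]`. -/
def MatroidBases {n : ℕ} (k : ℕ) (ℬ : Set (Finset (Fin n))) : Prop :=
  ℬ.Nonempty ∧ (∀ B ∈ ℬ, B.card = k) ∧
    ∀ A ∈ ℬ, ∀ B ∈ ℬ, ∀ a ∈ A \ B, ∃ b ∈ B \ A, insert b (A.erase a) ∈ ℬ

/-- `Φ(B) = B ∪ ([n] \ B)*`. -/
def Phi {n : ℕ} (B : Finset (Fin n)) : Finset (J n) :=
  B.image (fun i => (i, false)) ∪ Bᶜ.image (fun i => (i, true))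

section Aux

open Set Matroid


open Set Matroid

-- minimal subset with e in closure
lemma exists_minimal_closure_subset {α : Type*} (M : Matroid α) (e : α) :
    ∀ (m : ℕ) (B : Set α), B.Finite → B.ncard ≤ m → e ∈ M.closure B →
      ∃ I ⊆ B, e ∈ M.closure I ∧ ∀ f ∈ I, e ∉ M.closure (I \ {f}) := by
  intro m
  induction m with
  | zero =>
    intro B hfin hcard hcl
    have : B = ∅ := by
      rw [← Set.ncard_eq_zero hfin]; omega
    exact ⟨B, Subset.rfl, hcl, by simp [this]⟩
  | succ m ih =>
    intro B hfin hcard hcl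
    by_cases hall : ∀ f ∈ B, e ∉ M.closure (B \ {f})
    · exact ⟨B, Subset.rfl, hcl, hall⟩
    · push_neg at hall
      obtain ⟨f, hfB, hfcl⟩ := hall
      have hlt := Set.ncard_diff_singleton_lt_of_mem hfB hfin
      obtain ⟨I, hIs, h1, h2⟩ := ih (B \ {f}) hfin.diff (by omega) hfcl
      exact ⟨I, hIs.trans diff_subset, h1, h2⟩

lemma symm_exchange_of_base {α : Type*} {M : Matroid α} {A B : Set α}
    (hA : M.IsBase A) (hB : M.IsBase B) (hBfin : B.Finite) {e : α}
    (heA : e ∈ A) (heB : e ∉ B) :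
    ∃ f ∈ B, f ∉ A ∧ M.IsBase (insert f (A \ {e})) ∧ M.IsBase (insert e (B \ {f})) := by
  have heE : e ∈ M.E := hA.subset_ground heA
  have hecl : e ∉ M.closure (A \ {e}) := hA.indep.notMem_closure_diff_of_mem heA
  have heclB : e ∈ M.closure B := by rw [hB.closure_eq]; exact heE
  obtain ⟨I, hIB, hIcl, hImin⟩ :=
    exists_minimal_closure_subset M e B.ncard B hBfin le_rfl heclB
  have hT : ∀ f ∈ I, e ∉ M.closure (B \ {f}) := by
    intro f hfI hcon
    have h1 : e ∉ M.closure (I \ {f}) := hImin f hfI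
    have h2 : e ∈ M.closure (insert f (I \ {f})) := by
      rwa [insert_diff_singleton, insert_eq_of_mem hfI]
    have h3 := Matroid.closure_exchange (M := M) ⟨h2, h1⟩
    have h4 : M.closure (insert e (I \ {f})) ⊆ M.closure (B \ {f}) := by
      apply Matroid.closure_subset_closure_of_subset_closure
      apply insert_subset hcon
      exact (diff_subset_diff_left hIB).trans
        (M.subset_closure _ (diff_subset.trans hB.subset_ground))
    exact hB.indep.notMem_closure_diff_of_mem (hIB hfI) (h4 h3.1)
  have hnot : ¬ (I ⊆ M.closure (A \ {e})) := by
    intro hsub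
    exact hecl (Matroid.closure_subset_closure_of_subset_closure hsub hIcl)
  obtain ⟨f, hfI, hfcl⟩ := not_subset.mp hnot
  have hfB : f ∈ B := hIB hfI
  have hfE : f ∈ M.E := hB.subset_ground hfB
  have hfA : f ∉ A := by
    intro hfA
    exact hfcl (M.subset_closure (A \ {e}) (diff_subset.trans hA.subset_ground)
      ⟨hfA, fun hfe => heB (hfe ▸ hfB)⟩)
  have hAd : M.Indep (A \ {e}) := hA.indep.subset diff_subset
  have hBd : M.Indep (B \ {f}) := hB.indep.subset diff_subset
  refine ⟨f, hfB, hfA, ?_, ?_⟩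
  · exact hA.exchange_isBase_of_indep hfA ((hAd.notMem_closure_iff hfE).mp hfcl).1
  · exact hB.exchange_isBase_of_indep heB ((hBd.notMem_closure_iff heE).mp (hT f hfI)).1

lemma mem_Phi {n : ℕ} {B : Finset (Fin n)} (x : J n) :
    x ∈ Phi B ↔ (x.1 ∈ B ↔ x.2 = false) := by
  obtain ⟨i, b⟩ := x
  cases b <;> simp [Phi, Prod.ext_iff, eq_comm]

lemma quad_swap {β : Type*} [DecidableEq β] (p q r s : β) :
    ({p, q, r, s} : Finset β) = {q, p, s, r} := by
  ext x; simp; tauto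

lemma phi_symmDiff {n : ℕ} (B : Finset (Fin n)) {i j : Fin n} (hi : i ∈ B) (hj : j ∉ B)
    (ea eb : Bool) :
    symmDiff (Phi B) ({(i, ea), (j, eb), (i, !ea), (j, !eb)} : Finset (J n)) =
      Phi (insert j (B.erase i)) := by
  have hij : i ≠ j := fun h => hj (h ▸ hi)
  ext ⟨x, bx⟩
  rw [Finset.mem_symmDiff]
  simp only [mem_Phi, Finset.mem_insert, Finset.mem_singleton, Finset.mem_erase, Prod.mk.injEq]
  by_cases hxi : x = i <;> by_cases hxj : x = j
  · exact absurd (hxi ▸ hxj) hij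
  · subst hxi
    cases bx <;> cases ea <;> simp_all
  · subst hxj
    cases bx <;> cases eb <;> simp_all
  · cases bx <;> simp_all

lemma finset_symm_exchange {n k : ℕ} {ℬ : Set (Finset (Fin n))} (h : MatroidBases k ℬ)
    {B₁ B₂ : Finset (Fin n)} (h1 : B₁ ∈ ℬ) (h2 : B₂ ∈ ℬ) {i : Fin n}
    (hi1 : i ∈ B₁) (hi2 : i ∉ B₂) :
    ∃ j ∈ B₂, j ∉ B₁ ∧ insert j (B₁.erase i) ∈ ℬ ∧ insert i (B₂.erase j) ∈ ℬ := by
  classical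
  set Base : Set (Fin n) → Prop := fun S => ∃ B ∈ ℬ, ↑B = S with hBase
  have exch : Matroid.ExchangeProperty Base := by
    rintro X Y ⟨BX, hBX, rfl⟩ ⟨BY, hBY, rfl⟩ a ha
    have ha' : a ∈ BX \ BY := by
      rw [Finset.mem_sdiff]; exact ⟨by exact_mod_cast ha.1, by exact_mod_cast ha.2⟩
    obtain ⟨b, hb, hins⟩ := h.2.2 BX hBX BY hBY a ha'
    rw [Finset.mem_sdiff] at hb
    refine ⟨b, ⟨by exact_mod_cast hb.1, by exact_mod_cast hb.2⟩,
      insert b (BX.erase a), hins, ?_⟩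
    push_cast [Finset.coe_insert, Finset.coe_erase]
    rfl
  obtain ⟨B0, hB0⟩ := h.1
  set M : Matroid (Fin n) := Matroid.ofIsBaseOfFinite Set.finite_univ Base
    ⟨↑B0, B0, hB0, rfl⟩ exch (fun B _ => Set.subset_univ _) with hM
  have hbase : ∀ S, M.IsBase S ↔ Base S := fun S => by
    rw [hM, Matroid.ofIsBaseOfFinite_isBase]
  have hA : M.IsBase ↑B₁ := (hbase _).mpr ⟨B₁, h1, rfl⟩
  have hB : M.IsBase ↑B₂ := (hbase _).mpr ⟨B₂, h2, rfl⟩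
  obtain ⟨f, hfB, hfA, hb1, hb2⟩ := symm_exchange_of_base hA hB (B₂.finite_toSet)
    (e := i) (by exact_mod_cast hi1) (by exact_mod_cast hi2)
  rw [hbase] at hb1 hb2
  obtain ⟨C1, hC1, hC1e⟩ := hb1
  obtain ⟨C2, hC2, hC2e⟩ := hb2
  have e1 : C1 = insert f (B₁.erase i) := by
    apply Finset.coe_injective
    rw [hC1e]; push_cast [Finset.coe_insert, Finset.coe_erase]; rfl
  have e2 : C2 = insert i (B₂.erase f) := by
    apply Finset.coe_injective
    rw [hC2e]; push_cast [Finset.coe_insert, Finset.coe_erase]; rfl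
  exact ⟨f, by exact_mod_cast hfB, by exact_mod_cast hfA, e1 ▸ hC1, e2 ▸ hC2⟩

end Aux

/-- if `ℬ` is the collection of bases of a matroid of rank `k` on `[n]`,
then `Φ(ℬ)` satisfies the Strong Exchange Property, i.e. it is the collection of bases of
a Lagrangian orthogonal matroid. -/
theorem phi_matroid_strong_exchange (n k : ℕ) (ℬ : Set (Finset (Fin n)))
    (h : MatroidBases k ℬ) :
    StrongExchange (Phi '' ℬ) := by
  rintro A ⟨B₁, hB₁, rfl⟩ C ⟨B₂, hB₂, rfl⟩ ⟨i, ba⟩ ha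
  have hi : (i ∈ B₁ ∧ i ∉ B₂) ∨ (i ∈ B₂ ∧ i ∉ B₁) := by
    rw [Finset.mem_symmDiff] at ha
    simp only [mem_Phi] at ha
    tauto
  rcases hi with ⟨hi1, hi2⟩ | ⟨hi2, hi1⟩
  · obtain ⟨j, hj2, hj1, hX, hY⟩ := finset_symm_exchange h hB₁ hB₂ hi1 hi2
    have hij : i ≠ j := fun e => hj1 (e ▸ hi1)
    refine ⟨(j, false), ?_, ?_, ?_, ?_⟩
    · rw [Finset.mem_sdiff, mem_Phi, mem_Phi]; simp [hj1, hj2]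
    · simp [jstar, Prod.ext_iff, hij.symm]
    · show symmDiff (Phi B₁) {(i, ba), (j, false), jstar (i, ba), jstar (j, false)} ∈ _
      simp only [jstar]
      rw [phi_symmDiff B₁ hi1 hj1 ba false]
      exact ⟨_, hX, rfl⟩
    · show symmDiff (Phi B₂) {(i, ba), (j, false), jstar (i, ba), jstar (j, false)} ∈ _
      simp only [jstar]
      rw [quad_swap, phi_symmDiff B₂ hj2 hi2 false ba]
      exact ⟨_, hY, rfl⟩
  · obtain ⟨j, hj1, hj2, hX, hY⟩ := finset_symm_exchange h hB₂ hB₁ hi2 hi1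
    have hij : i ≠ j := fun e => hj2 (e ▸ hi2)
    refine ⟨(j, true), ?_, ?_, ?_, ?_⟩
    · rw [Finset.mem_sdiff, mem_Phi, mem_Phi]; simp [hj1, hj2]
    · simp [jstar, Prod.ext_iff, hij.symm]
    · show symmDiff (Phi B₁) {(i, ba), (j, true), jstar (i, ba), jstar (j, true)} ∈ _
      simp only [jstar]
      rw [quad_swap, phi_symmDiff B₁ hj1 hi1 true ba]
      exact ⟨_, hY, rfl⟩
    · show symmDiff (Phi B₂) {(i, ba), (j, true), jstar (i, ba), jstar (j, true)} ∈ _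
      simp only [jstar]
      rw [phi_symmDiff B₂ hi2 hj2 ba true]
      exact ⟨_, hX, rfl⟩
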